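/- Two elements c, d ∈ U_k are conjugate (in the monoid sense: there exists x with x x̃ = d^ω, x̃ x = c^ω, and x c^{ω+1} x̃ = d^{ω+1}) if and only if cycletype(c) = cycletype(d), where cycletype(x) is the k-tuple of partitions recording the cycle structure of x^{ω+1} acting as a permutation on the blocks of each size of the partition underlying the idempotent x^ω. -/

import Mathlib

open Sum

/-- A set partition `d` of `[k] ∪ [k̄]` (encoded as a setoid on `Fin k ⊕ Fin k`,
top row = `inl`, bottom row = `inr`) is *uniform* if every block contains as many
top-row elements as bottom-row elements. -/
def IsUniform (k : ℕ) (d : Setoid (Fin k ⊕ Fin k)) : Prop :=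
  ∀ x : Fin k ⊕ Fin k,
    {a : Fin k | d.r (.inl a) x}.ncard = {b : Fin k | d.r (.inr b) x}.ncard

/-- Embedding of a two-row diagram into the top two rows of a three-row diagram. -/
def row12 (k : ℕ) : Fin k ⊕ Fin k → Fin k ⊕ (Fin k ⊕ Fin k) :=
  Sum.elim (fun a => .inl a) (fun b => .inr (.inl b))

/-- Embedding of a two-row diagram into the bottom two rows of a three-row diagram. -/
def row23 (k : ℕ) : Fin k ⊕ Fin k → Fin k ⊕ (Fin k ⊕ Fin k) :=
  Sum.elim (fun a => .inr (.inl a)) (fun b => .inr (.inr b))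

/-- Embedding of a two-row diagram into the outer two rows of a three-row diagram. -/
def row13 (k : ℕ) : Fin k ⊕ Fin k → Fin k ⊕ (Fin k ⊕ Fin k) :=
  Sum.elim (fun a => .inl a) (fun b => .inr (.inr b))

/-- The equivalence relation on the three-row vertex set generated by transporting
`d` along the embedding `f`. -/
def liftSetoid (k : ℕ) (f : Fin k ⊕ Fin k → Fin k ⊕ (Fin k ⊕ Fin k))
    (d : Setoid (Fin k ⊕ Fin k)) : Setoid (Fin k ⊕ (Fin k ⊕ Fin k)) :=
  Relation.EqvGen.setoid (fun x y => ∃ a b, d.r a b ∧ x = f a ∧ y = f b)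

/-- The diagram product: stack `d` on top of `d'`, take connected components of the
three-row diagram, and restrict to the outer rows. -/
def ubpMul {k : ℕ} (d d' : Setoid (Fin k ⊕ Fin k)) : Setoid (Fin k ⊕ Fin k) :=
  Setoid.comap (row13 k) (liftSetoid k (row12 k) d ⊔ liftSetoid k (row23 k) d')

/-- The identity diagram `{{1,1̄},…,{k,k̄}}`. -/
def ubpOne (k : ℕ) : Setoid (Fin k ⊕ Fin k) := Setoid.ker (Sum.elim id id)

/-- The set partition of `[k]` induced on the top row. -/
def topPart {k : ℕ} (d : Setoid (Fin k ⊕ Fin k)) : Setoid (Fin k) :=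
  Setoid.comap Sum.inl d

/-- The set partition of `[k]` induced on the bottom row. -/
def botPart {k : ℕ} (d : Setoid (Fin k ⊕ Fin k)) : Setoid (Fin k) :=
  Setoid.comap Sum.inr d

/-- The idempotent diagram `e_π = {A ∪ Ā : A ∈ π}` associated to a set partition `π` of `[k]`. -/
def ePart {k : ℕ} (π : Setoid (Fin k)) : Setoid (Fin k ⊕ Fin k) :=
  Setoid.comap (Sum.elim id id) π

/-- The diagram `{{i, σ(i)‾} : i ∈ [k]}` of a permutation `σ ∈ S_k`. -/
def permToUBP {k : ℕ} (σ : Equiv.Perm (Fin k)) : Setoid (Fin k ⊕ Fin k) :=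
  Setoid.ker (Sum.elim (fun i => σ i) id)

/-- The reflection `d̃` of a diagram across a horizontal line (swap barred/unbarred). -/
def reflectUBP {k : ℕ} (d : Setoid (Fin k ⊕ Fin k)) : Setoid (Fin k ⊕ Fin k) :=
  Setoid.comap Sum.swap d

/-- The image of a set `C ⊆ [k]` of top-row elements under the block bijection of `d`:
the set of bottom-row elements connected to some element of `C`. -/
def blockMap {k : ℕ} (d : Setoid (Fin k ⊕ Fin k)) (C : Set (Fin k)) : Set (Fin k) :=
  {j | ∃ i ∈ C, d.r (.inl i) (.inr j)}

/-- The type of uniform block permutations of `[k]`. -/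
def UBPel (k : ℕ) : Type := {d : Setoid (Fin k ⊕ Fin k) // IsUniform k d}

/-- Two block-size-preserving block permutations (`c'` of the blocks of `πc`, `d'` of
the blocks of `πd`) have the same cycle type, i.e. there is a size-preserving
bijection between blocks intertwining the two block permutations. -/
def SameCycleType (k : ℕ) (πc : Setoid (Fin k)) (c' : Setoid (Fin k ⊕ Fin k))
    (πd : Setoid (Fin k)) (d' : Setoid (Fin k ⊕ Fin k)) : Prop :=
  ∃ Φ : ↥πc.classes ≃ ↥πd.classes,
    (∀ C : ↥πc.classes, (C : Set (Fin k)).ncard = ((Φ C : Set (Fin k))).ncard) ∧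
    ∀ C D : ↥πc.classes, blockMap c' (C : Set (Fin k)) = (D : Set (Fin k)) →
      blockMap d' ((Φ C : Set (Fin k))) = ((Φ D : Set (Fin k)))

namespace UBPaux

variable {k : ℕ} {d d' : Setoid (Fin k ⊕ Fin k)}

lemma uni_nonempty_iff (hd : IsUniform k d) (x : Fin k ⊕ Fin k) :
    {a : Fin k | d (.inl a) x}.Nonempty ↔ {b : Fin k | d (.inr b) x}.Nonempty := by
  rw [← Set.ncard_pos (Set.toFinite _), ← Set.ncard_pos (Set.toFinite _), hd x]

lemma exists_bot (hd : IsUniform k d) (i : Fin k) : ∃ j, d (inl i) (inr j) := by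
  have h := (uni_nonempty_iff hd (inl i)).1 ⟨i, d.refl _⟩
  obtain ⟨j, hj⟩ := h
  exact ⟨j, d.symm hj⟩

lemma exists_top (hd : IsUniform k d) (j : Fin k) : ∃ i, d (inl i) (inr j) := by
  have h := (uni_nonempty_iff hd (inr j)).2 ⟨j, d.refl _⟩
  exact h

/-- which middle-row indices a 3-row vertex "touches". -/
def touch (d d' : Setoid (Fin k ⊕ Fin k)) : Fin k ⊕ (Fin k ⊕ Fin k) → Fin k → Prop
  | .inl i, m => d (.inl i) (.inr m)
  | .inr (.inl m₀), m => m₀ = m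
  | .inr (.inr j), m => d' (.inl m) (.inr j)

def rho (d d' : Setoid (Fin k ⊕ Fin k)) : Setoid (Fin k) := botPart d ⊔ topPart d'

def E3 (d d' : Setoid (Fin k ⊕ Fin k)) (x y : Fin k ⊕ (Fin k ⊕ Fin k)) : Prop :=
  ∃ m m', touch d d' x m ∧ touch d d' y m' ∧ rho d d' m m'

lemma rho_left {m m' : Fin k} (h : d (inr m) (inr m')) : rho d d' m m' :=
  Setoid.le_def.1 (le_sup_left : botPart d ≤ rho d d') h

lemma rho_right {m m' : Fin k} (h : d' (inl m) (inl m')) : rho d d' m m' :=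
  Setoid.le_def.1 (le_sup_right : topPart d' ≤ rho d d') h

lemma touch_exists (hd : IsUniform k d) (hd' : IsUniform k d') :
    ∀ x, ∃ m, touch d d' x m
  | .inl i => exists_bot hd i
  | .inr (.inl m₀) => ⟨m₀, rfl⟩
  | .inr (.inr j) => exists_top hd' j

lemma touch_rho : ∀ (x) {m m' : Fin k}, touch d d' x m → touch d d' x m' → rho d d' m m'
  | .inl i, m, m', h1, h2 => rho_left (d.trans (d.symm h1) h2)
  | .inr (.inl m₀), m, m', h1, h2 => by
      have e1 : m₀ = m := h1
      have e2 : m₀ = m' := h2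
      subst e1; subst e2; exact (rho d d').refl _
  | .inr (.inr j), m, m', h1, h2 => rho_right (d'.trans h1 (d'.symm h2))

def E3setoid (hd : IsUniform k d) (hd' : IsUniform k d') :
    Setoid (Fin k ⊕ (Fin k ⊕ Fin k)) where
  r := E3 d d'
  iseqv := by
    constructor
    · intro x
      obtain ⟨m, hm⟩ := touch_exists hd hd' x
      exact ⟨m, m, hm, hm, (rho d d').refl m⟩
    · rintro x y ⟨m, m', h1, h2, h3⟩
      exact ⟨m', m, h2, h1, (rho d d').symm h3⟩
    · rintro x y z ⟨m, m', h1, h2, h3⟩ ⟨n, n', h4, h5, h6⟩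
      exact ⟨m, n', h1, h5, (rho d d').trans h3 ((rho d d').trans (touch_rho y h2 h4) h6)⟩

end UBPaux
namespace UBPaux

variable {k : ℕ} {d d' : Setoid (Fin k ⊕ Fin k)}

section char

lemma gen12_le (hd : IsUniform k d) :
    ∀ x y, (fun x y => ∃ a b, d.r a b ∧ x = row12 k a ∧ y = row12 k b) x y →
    E3 d d' x y := by
  rintro x y ⟨a, b, hab, rfl, rfl⟩
  cases a with
  | inl i =>
    cases b with
    | inl i' =>
      obtain ⟨m, hm⟩ := exists_bot hd i
      obtain ⟨m', hm'⟩ := exists_bot hd i'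
      exact ⟨m, m', hm, hm', rho_left (d.trans (d.symm hm) (d.trans hab hm'))⟩
    | inr m => exact ⟨m, m, hab, rfl, (rho d d').refl m⟩
  | inr m =>
    cases b with
    | inl i' => exact ⟨m, m, rfl, d.symm hab, (rho d d').refl m⟩
    | inr m' => exact ⟨m, m', rfl, rfl, rho_left hab⟩

lemma gen23_le (hd' : IsUniform k d') :
    ∀ x y, (fun x y => ∃ a b, d'.r a b ∧ x = row23 k a ∧ y = row23 k b) x y →
    E3 d d' x y := by
  rintro x y ⟨a, b, hab, rfl, rfl⟩
  cases a with
  | inl m =>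
    cases b with
    | inl m' => exact ⟨m, m', rfl, rfl, rho_right hab⟩
    | inr j => exact ⟨m, m, rfl, hab, (rho d d').refl m⟩
  | inr j =>
    cases b with
    | inl m' => exact ⟨m', m', d'.symm hab, rfl, (rho d d').refl m'⟩
    | inr j' =>
      obtain ⟨m, hm⟩ := exists_top hd' j
      obtain ⟨m', hm'⟩ := exists_top hd' j'
      exact ⟨m, m', hm, hm', rho_right (d'.trans hm (d'.trans hab (d'.symm hm')))⟩

lemma lift_le_sup12 {a b : Fin k ⊕ Fin k} (hab : d a b) :
    (liftSetoid k (row12 k) d ⊔ liftSetoid k (row23 k) d') (row12 k a) (row12 k b) :=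
  Setoid.le_def.1 le_sup_left (Relation.EqvGen.rel _ _ ⟨a, b, hab, rfl, rfl⟩)

lemma lift_le_sup23 {a b : Fin k ⊕ Fin k} (hab : d' a b) :
    (liftSetoid k (row12 k) d ⊔ liftSetoid k (row23 k) d') (row23 k a) (row23 k b) :=
  Setoid.le_def.1 le_sup_right (Relation.EqvGen.rel _ _ ⟨a, b, hab, rfl, rfl⟩)

lemma mid_rel {m m' : Fin k} (h : rho d d' m m') :
    (liftSetoid k (row12 k) d ⊔ liftSetoid k (row23 k) d')
      (.inr (.inl m)) (.inr (.inl m')) := by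
  have hle : rho d d' ≤ Setoid.comap (fun m : Fin k => (Sum.inr (Sum.inl m) : Fin k ⊕ (Fin k ⊕ Fin k)))
      (liftSetoid k (row12 k) d ⊔ liftSetoid k (row23 k) d') := by
    refine sup_le (Setoid.le_def.2 ?_) (Setoid.le_def.2 ?_)
    · intro a b hab
      exact lift_le_sup12 (d := d) (d' := d') (a := inr a) (b := inr b) hab
    · intro a b hab
      exact lift_le_sup23 (d := d) (d' := d') (a := inl a) (b := inl b) hab
  exact Setoid.le_def.1 hle h

lemma touch_conn : ∀ (x) {m : Fin k}, touch d d' x m →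
    (liftSetoid k (row12 k) d ⊔ liftSetoid k (row23 k) d') x (.inr (.inl m))
  | .inl i, m, h => lift_le_sup12 (a := inl i) (b := inr m) h
  | .inr (.inl m₀), m, h => by
      have e : m₀ = m := h
      subst e; exact Setoid.refl' _ _
  | .inr (.inr j), m, h =>
      ((liftSetoid k (row12 k) d ⊔ liftSetoid k (row23 k) d')).symm
        (lift_le_sup23 (a := inl m) (b := inr j) h)

lemma sup_eq_E3 (hd : IsUniform k d) (hd' : IsUniform k d') :
    (liftSetoid k (row12 k) d ⊔ liftSetoid k (row23 k) d') = E3setoid hd hd' := by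
  refine le_antisymm (sup_le (Setoid.eqvGen_le (gen12_le hd)) (Setoid.eqvGen_le (gen23_le hd'))) ?_
  refine Setoid.le_def.2 ?_
  rintro x y ⟨m, m', h1, h2, h3⟩
  have s := liftSetoid k (row12 k) d ⊔ liftSetoid k (row23 k) d'
  refine Setoid.trans' _ (touch_conn x h1) ?_
  refine Setoid.trans' _ (mid_rel h3) ?_
  exact Setoid.symm' _ (touch_conn y h2)

lemma mul_rel_iff (hd : IsUniform k d) (hd' : IsUniform k d') (x y : Fin k ⊕ Fin k) :
    (ubpMul d d') x y ↔ E3 d d' (row13 k x) (row13 k y) := by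
  show (liftSetoid k (row12 k) d ⊔ liftSetoid k (row23 k) d') (row13 k x) (row13 k y) ↔ _
  rw [sup_eq_E3 hd hd']
  exact Iff.rfl

lemma mul_inl_inr (hd : IsUniform k d) (hd' : IsUniform k d') (i j : Fin k) :
    (ubpMul d d') (inl i) (inr j) ↔
      ∃ m m', d (inl i) (inr m) ∧ d' (inl m') (inr j) ∧ rho d d' m m' :=
  mul_rel_iff hd hd' (inl i) (inr j)

lemma mul_inl_inl (hd : IsUniform k d) (hd' : IsUniform k d') (i i' : Fin k) :
    (ubpMul d d') (inl i) (inl i') ↔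
      ∃ m m', d (inl i) (inr m) ∧ d (inl i') (inr m') ∧ rho d d' m m' :=
  mul_rel_iff hd hd' (inl i) (inl i')

lemma mul_inr_inr (hd : IsUniform k d) (hd' : IsUniform k d') (j j' : Fin k) :
    (ubpMul d d') (inr j) (inr j') ↔
      ∃ m m', d' (inl m) (inr j) ∧ d' (inl m') (inr j') ∧ rho d d' m m' :=
  mul_rel_iff hd hd' (inr j) (inr j')

lemma top_mul_le (hd : IsUniform k d) (hd' : IsUniform k d') {i i' : Fin k}
    (h : d (inl i) (inl i')) : (ubpMul d d') (inl i) (inl i') := by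
  obtain ⟨m, hm⟩ := exists_bot hd i
  obtain ⟨m', hm'⟩ := exists_bot hd i'
  exact (mul_inl_inl hd hd' i i').2
    ⟨m, m', hm, hm', rho_left (d.trans (d.symm hm) (d.trans h hm'))⟩

lemma bot_mul_le (hd : IsUniform k d) (hd' : IsUniform k d') {j j' : Fin k}
    (h : d' (inr j) (inr j')) : (ubpMul d d') (inr j) (inr j') := by
  obtain ⟨m, hm⟩ := exists_top hd' j
  obtain ⟨m', hm'⟩ := exists_top hd' j'
  exact (mul_inr_inr hd hd' j j').2
    ⟨m, m', hm, hm', rho_right (d'.trans hm (d'.trans h (d'.symm hm')))⟩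

end char
end UBPaux
namespace UBPaux

variable {k : ℕ} {d d' : Setoid (Fin k ⊕ Fin k)}

section compat
variable (hcomp : ∀ m m' : Fin k, d (inr m) (inr m') ↔ d' (inl m) (inl m'))

include hcomp

lemma rho_compat {m m' : Fin k} : rho d d' m m' ↔ d (inr m) (inr m') := by
  have h : topPart d' = botPart d := Setoid.ext fun a b => (hcomp a b).symm
  show (botPart d ⊔ topPart d') m m' ↔ _
  rw [h, sup_idem]
  exact Iff.rfl

lemma mul_inl_inr_compat (hd : IsUniform k d) (hd' : IsUniform k d') (i j : Fin k) :
    (ubpMul d d') (inl i) (inr j) ↔ ∃ m, d (inl i) (inr m) ∧ d' (inl m) (inr j) := by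
  rw [mul_inl_inr hd hd']
  constructor
  · rintro ⟨m, m', h1, h2, h3⟩
    exact ⟨m, h1, d'.trans ((hcomp m m').1 ((rho_compat hcomp).1 h3)) h2⟩
  · rintro ⟨m, h1, h2⟩
    exact ⟨m, m, h1, h2, (rho d d').refl m⟩

lemma mul_inl_inl_compat (hd : IsUniform k d) (hd' : IsUniform k d') (i i' : Fin k) :
    (ubpMul d d') (inl i) (inl i') ↔ d (inl i) (inl i') := by
  constructor
  · intro h
    obtain ⟨m, m', h1, h2, h3⟩ := (mul_inl_inl hd hd' i i').1 h
    exact d.trans h1 (d.trans ((rho_compat hcomp).1 h3) (d.symm h2))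
  · exact top_mul_le hd hd'

lemma mul_inr_inr_compat (hd : IsUniform k d) (hd' : IsUniform k d') (j j' : Fin k) :
    (ubpMul d d') (inr j) (inr j') ↔ d' (inr j) (inr j') := by
  constructor
  · intro h
    obtain ⟨m, m', h1, h2, h3⟩ := (mul_inr_inr hd hd' j j').1 h
    exact d'.trans (d'.symm h1) (d'.trans ((hcomp m m').1 ((rho_compat hcomp).1 h3)) h2)
  · exact bot_mul_le hd hd'

end compat

section idem
variable {e : Setoid (Fin k ⊕ Fin k)}

lemma idem_diag (he : IsUniform k e) (h : ubpMul e e = e) (m : Fin k) :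
    e (inl m) (inr m) := by
  obtain ⟨i, hi⟩ := exists_top he m
  obtain ⟨j, hj⟩ := exists_bot he m
  have hij : (ubpMul e e) (inl i) (inr j) :=
    (mul_inl_inr he he i j).2 ⟨m, m, hi, hj, (rho e e).refl m⟩
  rw [h] at hij
  have hmj : e (inr m) (inr j) := e.trans (e.symm hi) hij
  exact e.trans hj (e.symm hmj)

lemma idem_cross (he : IsUniform k e) (h : ubpMul e e = e) (i j : Fin k) :
    e (inl i) (inr j) ↔ e (inl i) (inl j) := by
  constructor
  · intro hh; exact e.trans hh (e.symm (idem_diag he h j))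
  · intro hh; exact e.trans hh (idem_diag he h j)

lemma idem_bot (he : IsUniform k e) (h : ubpMul e e = e) (i j : Fin k) :
    e (inr i) (inr j) ↔ e (inl i) (inl j) := by
  constructor
  · intro hh; exact e.trans (idem_diag he h i) (e.trans hh (e.symm (idem_diag he h j)))
  · intro hh; exact e.trans (e.symm (idem_diag he h i)) (e.trans hh (idem_diag he h j))

end idem

section blockmap

lemma blockMap_of_class (i : Fin k) :
    blockMap d {a | d (inl a) (inl i)} = {b | d (inl i) (inr b)} := by
  ext j
  constructor
  · rintro ⟨a, ha, haj⟩
    exact d.trans (d.symm ha) haj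
  · intro hj
    exact ⟨i, d.refl _, hj⟩

lemma ncard_cross (hd : IsUniform k d) (i : Fin k) :
    {a | d (inl a) (inl i)}.ncard = {b | d (inl i) (inr b)}.ncard := by
  have := hd (inl i)
  rwa [show {b : Fin k | d (inr b) (inl i)} = {b : Fin k | d (inl i) (inr b)} from
    Set.ext fun b => ⟨fun h => d.symm h, fun h => d.symm h⟩] at this

lemma cross_is_class {i j₀ : Fin k} (h : d (inl i) (inr j₀)) :
    {b | d (inl i) (inr b)} = {b | (botPart d) b j₀} :=
  Set.ext fun b => ⟨fun hb => d.trans (d.symm hb) h, fun hb => d.trans h (d.symm hb)⟩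

end blockmap
end UBPaux
namespace UBPaux

variable {k : ℕ}

section classes
variable {π : Setoid (Fin k)}

def clsOf (π : Setoid (Fin k)) (i : Fin k) : ↥π.classes :=
  ⟨{a | π a i}, Setoid.mem_classes π i⟩

lemma mem_clsOf_iff {a i : Fin k} : a ∈ (clsOf π i : Set (Fin k)) ↔ π a i := Iff.rfl

lemma mem_clsOf_self (i : Fin k) : i ∈ (clsOf π i : Set (Fin k)) := π.refl i

lemma class_nonempty {C : Set (Fin k)} (h : C ∈ π.classes) : C.Nonempty := by
  obtain ⟨y, rfl⟩ := h; exact ⟨y, π.refl y⟩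

lemma rel_of_mem_class {C : Set (Fin k)} (h : C ∈ π.classes) {i j : Fin k}
    (hi : i ∈ C) (hj : j ∈ C) : π i j := by
  obtain ⟨y, rfl⟩ := h
  exact π.trans hi (π.symm hj)

lemma mem_class_closed {C : Set (Fin k)} (h : C ∈ π.classes) {i j : Fin k}
    (hi : i ∈ C) (hij : π j i) : j ∈ C := by
  obtain ⟨y, rfl⟩ := h
  exact π.trans hij hi

lemma class_eq_clsOf {C : ↥π.classes} {i : Fin k} (h : i ∈ (C : Set (Fin k))) :
    C = clsOf π i := by
  refine Subtype.ext (Setoid.eq_of_mem_classes C.2 h (clsOf π i).2 (mem_clsOf_self i))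

lemma clsOf_eq_of_rel {i j : Fin k} (h : π i j) : clsOf π i = clsOf π j :=
  Subtype.ext (Set.ext fun a => ⟨fun ha => π.trans ha h, fun ha => π.trans ha (π.symm h)⟩)

end classes

section mk
variable (π₁ π₂ : Setoid (Fin k)) (Φ : ↥π₁.classes ≃ ↥π₂.classes)

def mkRel : Fin k ⊕ Fin k → Fin k ⊕ Fin k → Prop
  | .inl i, .inl i' => π₁ i i'
  | .inl i, .inr j => j ∈ (Φ (clsOf π₁ i) : Set (Fin k))
  | .inr j, .inl i => j ∈ (Φ (clsOf π₁ i) : Set (Fin k))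
  | .inr j, .inr j' => π₂ j j'

def mkSetoid : Setoid (Fin k ⊕ Fin k) where
  r := mkRel π₁ π₂ Φ
  iseqv := by
    constructor
    · rintro (i | j)
      · exact π₁.refl i
      · exact π₂.refl j
    · rintro (i | j) (i' | j') h
      · exact π₁.symm h
      · exact h
      · exact h
      · exact π₂.symm h
    · rintro (i | j) (i' | j') (i'' | j'') h1 h2
      · exact π₁.trans h1 h2
      · -- inl i, inl i', inr j''
        show j'' ∈ (Φ (clsOf π₁ i) : Set (Fin k))
        rwa [clsOf_eq_of_rel (h1 : π₁ i i')]
      · -- inl i, inr j', inl i''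
        have h3 : Φ (clsOf π₁ i) = Φ (clsOf π₁ i'') :=
          Subtype.ext (Setoid.eq_of_mem_classes (Φ (clsOf π₁ i)).2 h1
            (Φ (clsOf π₁ i'')).2 h2)
        have h4 : clsOf π₁ i = clsOf π₁ i'' := Φ.injective h3
        have : i ∈ (clsOf π₁ i'' : Set (Fin k)) := by
          rw [← h4]; exact mem_clsOf_self i
        exact this
      · -- inl i, inr j', inr j''
        exact mem_class_closed (Φ (clsOf π₁ i)).2 h1 (π₂.symm h2)
      · -- inr j, inl i', inl i''
        show j ∈ (Φ (clsOf π₁ i'') : Set (Fin k))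
        rwa [← clsOf_eq_of_rel (h2 : π₁ i' i'')]
      · -- inr j, inl i', inr j''
        exact rel_of_mem_class (Φ (clsOf π₁ i')).2 h1 h2
      · -- inr j, inr j', inl i''
        exact mem_class_closed (Φ (clsOf π₁ i'')).2 h2 (h1 : π₂ j j')
      · exact π₂.trans h1 h2

variable {π₁ π₂}

lemma mkSetoid_uniform (hsize : ∀ C : ↥π₁.classes,
    (C : Set (Fin k)).ncard = ((Φ C : Set (Fin k))).ncard) :
    IsUniform k (mkSetoid π₁ π₂ Φ) := by
  rintro (i | j)
  · have h1 : {a : Fin k | (mkSetoid π₁ π₂ Φ).r (.inl a) (.inl i)} =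
        (clsOf π₁ i : Set (Fin k)) := rfl
    have h2 : {b : Fin k | (mkSetoid π₁ π₂ Φ).r (.inr b) (.inl i)} =
        (Φ (clsOf π₁ i) : Set (Fin k)) := rfl
    rw [h1, h2]
    exact hsize (clsOf π₁ i)
  · have h1 : {a : Fin k | (mkSetoid π₁ π₂ Φ).r (.inl a) (.inr j)} =
        ((Φ.symm (clsOf π₂ j)) : Set (Fin k)) := by
      ext a
      show j ∈ (Φ (clsOf π₁ a) : Set (Fin k)) ↔ a ∈ ((Φ.symm (clsOf π₂ j)) : Set (Fin k))
      constructor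
      · intro h
        have h3 : Φ (clsOf π₁ a) = clsOf π₂ j := class_eq_clsOf h
        have h4 : clsOf π₁ a = Φ.symm (clsOf π₂ j) := by
          rw [← h3, Equiv.symm_apply_apply]
        rw [← h4]
        exact mem_clsOf_self a
      · intro h
        have h3 : Φ.symm (clsOf π₂ j) = clsOf π₁ a := class_eq_clsOf h
        have h4 : Φ (clsOf π₁ a) = clsOf π₂ j := by
          rw [← h3, Equiv.apply_symm_apply]
        rw [h4]
        exact mem_clsOf_self j
    have h2 : {b : Fin k | (mkSetoid π₁ π₂ Φ).r (.inr b) (.inr j)} =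
        (clsOf π₂ j : Set (Fin k)) := rfl
    rw [h1, h2]
    rw [hsize (Φ.symm (clsOf π₂ j)), Equiv.apply_symm_apply]

end mk
end UBPaux
namespace UBPaux

variable {k : ℕ}

section more
variable {d d' : Setoid (Fin k ⊕ Fin k)}

lemma setoid_ext3 {s t : Setoid (Fin k ⊕ Fin k)}
    (h1 : ∀ i i', s (inl i) (inl i') ↔ t (inl i) (inl i'))
    (h2 : ∀ i j, s (inl i) (inr j) ↔ t (inl i) (inr j))
    (h3 : ∀ j j', s (inr j) (inr j') ↔ t (inr j) (inr j')) : s = t := by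
  refine Setoid.ext ?_
  rintro (i | j) (i' | j')
  · exact h1 i i'
  · exact h2 i j'
  · exact ⟨fun h => t.symm ((h2 i' j).1 (s.symm h)), fun h => s.symm ((h2 i' j).2 (t.symm h))⟩
  · exact h3 j j'

lemma blockMap_mul (hcomp : ∀ m m', d (inr m) (inr m') ↔ d' (inl m) (inl m'))
    (hd : IsUniform k d) (hd' : IsUniform k d') (S : Set (Fin k)) :
    blockMap (ubpMul d d') S = blockMap d' (blockMap d S) := by
  ext j
  constructor
  · rintro ⟨i, hi, hij⟩
    obtain ⟨m, h1, h2⟩ := (mul_inl_inr_compat hcomp hd hd' i j).1 hij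
    exact ⟨m, ⟨i, hi, h1⟩, h2⟩
  · rintro ⟨m, ⟨i, hi, h1⟩, h2⟩
    exact ⟨i, hi, (mul_inl_inr_compat hcomp hd hd' i j).2 ⟨m, h1, h2⟩⟩

lemma blockMap_idem {e : Setoid (Fin k ⊕ Fin k)} {π : Setoid (Fin k)}
    (hcross : ∀ i j, e (inl i) (inr j) ↔ π i j) {C : Set (Fin k)}
    (hC : C ∈ π.classes) : blockMap e C = C := by
  obtain ⟨y, rfl⟩ := hC
  ext j
  constructor
  · rintro ⟨a, (ha : π a y), haj⟩
    exact π.trans (π.symm ((hcross a j).1 haj)) ha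
  · intro hj
    exact ⟨j, hj, (hcross j j).2 (π.refl j)⟩

lemma blockMap_of_rel_class {π : Setoid (Fin k)}
    (htop : ∀ a b, d (inl a) (inl b) ↔ π a b) (i : Fin k) :
    blockMap d {a | π a i} = {b | d (inl i) (inr b)} := by
  have h : {a | π a i} = {a | d (inl a) (inl i)} := Set.ext fun a => (htop a i).symm
  rw [h, blockMap_of_class]

lemma blockMap_class_spec (hd : IsUniform k d) {π₁ π₂ : Setoid (Fin k)}
    (htop : ∀ a b, d (inl a) (inl b) ↔ π₁ a b)
    (hbot : ∀ a b, d (inr a) (inr b) ↔ π₂ a b)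
    {C : Set (Fin k)} (hC : C ∈ π₁.classes) :
    blockMap d C ∈ π₂.classes ∧ C.ncard = (blockMap d C).ncard := by
  obtain ⟨i, rfl⟩ := hC
  rw [blockMap_of_rel_class htop i]
  obtain ⟨j₀, hj₀⟩ := exists_bot hd i
  have hcl : {b | d (inl i) (inr b)} = {b | π₂ b j₀} := by
    rw [cross_is_class hj₀]
    exact Set.ext fun b => hbot b j₀
  constructor
  · rw [hcl]; exact Setoid.mem_classes π₂ j₀
  · rw [← ncard_cross hd i]
    congr 1
    ext a; simp only [Set.mem_setOf_eq]; exact (htop a i).symm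

lemma uniform_of_epart {e : Setoid (Fin k ⊕ Fin k)} {π : Setoid (Fin k)}
    (he1 : ∀ a b, e (inl a) (inl b) ↔ π a b)
    (he2 : ∀ a b, e (inl a) (inr b) ↔ π a b)
    (he3 : ∀ a b, e (inr a) (inr b) ↔ π a b) : IsUniform k e := by
  rintro (i | j)
  · have h1 : {a : Fin k | e.r (.inl a) (.inl i)} = {a : Fin k | π a i} :=
      Set.ext fun a => he1 a i
    have h2 : {b : Fin k | e.r (.inr b) (.inl i)} = {a : Fin k | π a i} :=
      Set.ext fun b => ⟨fun h => π.symm ((he2 i b).1 (e.symm h)),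
        fun h => e.symm ((he2 i b).2 (π.symm h))⟩
    rw [h1, h2]
  · have h1 : {a : Fin k | e.r (.inl a) (.inr j)} = {a : Fin k | π a j} :=
      Set.ext fun a => he2 a j
    have h2 : {b : Fin k | e.r (.inr b) (.inr j)} = {a : Fin k | π a j} :=
      Set.ext fun b => he3 b j
    rw [h1, h2]

end more

section mkmul
variable {π₁ π₂ : Setoid (Fin k)} (Φ : ↥π₁.classes ≃ ↥π₂.classes)
variable {e : Setoid (Fin k ⊕ Fin k)}

lemma mk_mul_symm
    (hsize : ∀ C : ↥π₁.classes, (C : Set (Fin k)).ncard = ((Φ C : Set (Fin k))).ncard)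
    (hsz2 : ∀ D : ↥π₂.classes, (D : Set (Fin k)).ncard = ((Φ.symm D : Set (Fin k))).ncard)
    (he1 : ∀ a b, e (inl a) (inl b) ↔ π₁ a b)
    (he2 : ∀ a b, e (inl a) (inr b) ↔ π₁ a b)
    (he3 : ∀ a b, e (inr a) (inr b) ↔ π₁ a b) :
    ubpMul (mkSetoid π₁ π₂ Φ) (mkSetoid π₂ π₁ Φ.symm) = e := by
  have hA := mkSetoid_uniform Φ hsize
  have hB := mkSetoid_uniform Φ.symm hsz2
  have hcomp : ∀ m m', (mkSetoid π₁ π₂ Φ) (inr m) (inr m') ↔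
      (mkSetoid π₂ π₁ Φ.symm) (inl m) (inl m') := fun m m' => Iff.rfl
  refine setoid_ext3 ?_ ?_ ?_
  · intro i i'
    exact (mul_inl_inl_compat hcomp hA hB i i').trans (he1 i i').symm
  · intro i j
    rw [mul_inl_inr_compat hcomp hA hB i j, he2 i j]
    constructor
    · rintro ⟨m, h1, h2⟩
      have h3 : Φ (clsOf π₁ i) = clsOf π₂ m := class_eq_clsOf h1
      have h5 : j ∈ (Φ.symm (clsOf π₂ m) : Set (Fin k)) := h2
      rw [← h3, Equiv.symm_apply_apply] at h5
      exact π₁.symm h5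
    · intro h
      obtain ⟨m, hm⟩ := class_nonempty (Φ (clsOf π₁ i)).2
      refine ⟨m, hm, ?_⟩
      show j ∈ (Φ.symm (clsOf π₂ m) : Set (Fin k))
      rw [← class_eq_clsOf hm, Equiv.symm_apply_apply]
      exact π₁.symm h
  · intro j j'
    exact (mul_inr_inr_compat hcomp hA hB j j').trans (he3 j j').symm

lemma e_mul_mk
    (hsize : ∀ C : ↥π₁.classes, (C : Set (Fin k)).ncard = ((Φ C : Set (Fin k))).ncard)
    (he1 : ∀ a b, e (inl a) (inl b) ↔ π₁ a b)
    (he2 : ∀ a b, e (inl a) (inr b) ↔ π₁ a b)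
    (he3 : ∀ a b, e (inr a) (inr b) ↔ π₁ a b) :
    ubpMul e (mkSetoid π₁ π₂ Φ) = mkSetoid π₁ π₂ Φ := by
  have hA := mkSetoid_uniform Φ hsize
  have hE := uniform_of_epart he1 he2 he3
  have hcomp : ∀ m m', e (inr m) (inr m') ↔ (mkSetoid π₁ π₂ Φ) (inl m) (inl m') :=
    fun m m' => he3 m m'
  refine setoid_ext3 ?_ ?_ ?_
  · intro i i'
    exact (mul_inl_inl_compat hcomp hE hA i i').trans (he1 i i')
  · intro i j
    rw [mul_inl_inr_compat hcomp hE hA i j]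
    constructor
    · rintro ⟨m, h1, h2⟩
      show j ∈ (Φ (clsOf π₁ i) : Set (Fin k))
      have h3 : π₁ i m := (he2 i m).1 h1
      rw [clsOf_eq_of_rel h3]
      exact h2
    · intro h
      exact ⟨i, (he2 i i).2 (π₁.refl i), h⟩
  · intro j j'
    exact mul_inr_inr_compat hcomp hE hA j j'

lemma mk_mul_e
    (hsize : ∀ C : ↥π₁.classes, (C : Set (Fin k)).ncard = ((Φ C : Set (Fin k))).ncard)
    (he1 : ∀ a b, e (inl a) (inl b) ↔ π₂ a b)
    (he2 : ∀ a b, e (inl a) (inr b) ↔ π₂ a b)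
    (he3 : ∀ a b, e (inr a) (inr b) ↔ π₂ a b) :
    ubpMul (mkSetoid π₁ π₂ Φ) e = mkSetoid π₁ π₂ Φ := by
  have hA := mkSetoid_uniform Φ hsize
  have hE := uniform_of_epart he1 he2 he3
  have hcomp : ∀ m m', (mkSetoid π₁ π₂ Φ) (inr m) (inr m') ↔ e (inl m) (inl m') :=
    fun m m' => (he1 m m').symm
  refine setoid_ext3 ?_ ?_ ?_
  · intro i i'
    exact mul_inl_inl_compat hcomp hA hE i i'
  · intro i j
    rw [mul_inl_inr_compat hcomp hA hE i j]
    constructor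
    · rintro ⟨m, h1, h2⟩
      have h3 : π₂ m j := (he2 m j).1 h2
      exact mem_class_closed (Φ (clsOf π₁ i)).2 h1 (π₂.symm h3)
    · intro h
      exact ⟨j, h, (he2 j j).2 (π₂.refl j)⟩
  · intro j j'
    exact (mul_inr_inr_compat hcomp hA hE j j').trans (he3 j j')

end mkmul
end UBPaux

open UBPaux

/-- Two elements `c, d ∈ U_k` are conjugate in the monoid sense iff
they have the same cycle type.  Here `ec = c^ω` is the unique idempotent power of `c`
(similarly `ed = d^ω`), `c^{ω+1} = ec·c` lies in the maximal subgroup at `ec = e_{π_c}`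
with `π_c = top(ec)`, and equality of cycle types is expressed by a size-preserving
bijection of blocks intertwining the two induced block permutations. -/
theorem ubp_conjugacy_iff_cycleType (k : ℕ) [M : Monoid (UBPel k)]
    (hmul : ∀ a b : UBPel k, (a * b).1 = ubpMul a.1 b.1)
    (hone : (1 : UBPel k).1 = ubpOne k)
    (c d ec ed : UBPel k)
    (hcn : ∃ n : ℕ, 0 < n ∧ c ^ n = ec) (hce : ec * ec = ec)
    (hdn : ∃ n : ℕ, 0 < n ∧ d ^ n = ed) (hde : ed * ed = ed) :
    (∃ x x' : UBPel k, x * x' * x = x ∧ x' * x * x' = x' ∧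
        x' * x = ec ∧ x * x' = ed ∧ x * (ec * c) * x' = ed * d) ↔
      SameCycleType k (topPart ec.1) ((ec * c).1) (topPart ed.1) ((ed * d).1) := by
  obtain ⟨n, hn, hcn⟩ := hcn
  obtain ⟨nd, hnd, hdn⟩ := hdn
  have hmul2 : ∀ a b t : UBPel k, a * b = t → ubpMul a.1 b.1 = t.1 := by
    intro a b t h; rw [← hmul a b, h]
  -- monoid identities for c
  have hcc : c * ec = ec * c := by rw [← hcn, ← pow_succ', ← pow_succ]
  have hc1 : c * c ^ (n - 1) = ec := by rw [← pow_succ', Nat.sub_add_cancel hn, hcn]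
  have hc1' : c ^ (n - 1) * c = ec := by rw [← pow_succ, Nat.sub_add_cancel hn, hcn]
  have hgec : ec * (ec * c) = ec * c := by rw [← mul_assoc, hce]
  have hgec' : (ec * c) * ec = ec * c := by rw [mul_assoc, hcc, ← mul_assoc, hce]
  have hgu : (ec * c) * (c ^ (n - 1) * ec) = ec := by
    calc ec * c * (c ^ (n - 1) * ec) = ec * ((c * c ^ (n - 1)) * ec) := by
          rw [mul_assoc ec c, ← mul_assoc c]
      _ = ec * (ec * ec) := by rw [hc1]
      _ = ec := by rw [hce, hce]
  have hug : (c ^ (n - 1) * ec) * (ec * c) = ec := by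
    calc (c ^ (n - 1) * ec) * (ec * c) = c ^ (n - 1) * ((ec * ec) * c) := by
          rw [mul_assoc, ← mul_assoc ec]
      _ = c ^ (n - 1) * (ec * c) := by rw [hce]
      _ = c ^ (n - 1) * (c * ec) := by rw [hcc]
      _ = (c ^ (n - 1) * c) * ec := by rw [mul_assoc]
      _ = ec := by rw [hc1', hce]
  -- monoid identities for d
  have hdd : d * ed = ed * d := by rw [← hdn, ← pow_succ', ← pow_succ]
  have hd1 : d * d ^ (nd - 1) = ed := by rw [← pow_succ', Nat.sub_add_cancel hnd, hdn]
  have hd1' : d ^ (nd - 1) * d = ed := by rw [← pow_succ, Nat.sub_add_cancel hnd, hdn]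
  have hhed : ed * (ed * d) = ed * d := by rw [← mul_assoc, hde]
  have hhed' : (ed * d) * ed = ed * d := by rw [mul_assoc, hdd, ← mul_assoc, hde]
  have hdu : (ed * d) * (d ^ (nd - 1) * ed) = ed := by
    calc ed * d * (d ^ (nd - 1) * ed) = ed * ((d * d ^ (nd - 1)) * ed) := by
          rw [mul_assoc ed d, ← mul_assoc d]
      _ = ed * (ed * ed) := by rw [hd1]
      _ = ed := by rw [hde, hde]
  have hud : (d ^ (nd - 1) * ed) * (ed * d) = ed := by
    calc (d ^ (nd - 1) * ed) * (ed * d) = d ^ (nd - 1) * ((ed * ed) * d) := by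
          rw [mul_assoc, ← mul_assoc ed]
      _ = d ^ (nd - 1) * (ed * d) := by rw [hde]
      _ = d ^ (nd - 1) * (d * ed) := by rw [hdd]
      _ = (d ^ (nd - 1) * d) * ed := by rw [mul_assoc]
      _ = ed := by rw [hd1', hde]
  -- idempotent structure
  have hecIdem : ubpMul ec.1 ec.1 = ec.1 := hmul2 ec ec ec hce
  have hedIdem : ubpMul ed.1 ed.1 = ed.1 := hmul2 ed ed ed hde
  have ec1 : ∀ a b, ec.1 (inl a) (inl b) ↔ (topPart ec.1) a b := fun _ _ => Iff.rfl
  have ec2 : ∀ a b, ec.1 (inl a) (inr b) ↔ (topPart ec.1) a b := idem_cross ec.2 hecIdem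
  have ec3 : ∀ a b, ec.1 (inr a) (inr b) ↔ (topPart ec.1) a b := idem_bot ec.2 hecIdem
  have ed1 : ∀ a b, ed.1 (inl a) (inl b) ↔ (topPart ed.1) a b := fun _ _ => Iff.rfl
  have ed2 : ∀ a b, ed.1 (inl a) (inr b) ↔ (topPart ed.1) a b := idem_cross ed.2 hedIdem
  have ed3 : ∀ a b, ed.1 (inr a) (inr b) ↔ (topPart ed.1) a b := idem_bot ed.2 hedIdem
  -- group element structure
  have hGtop : ∀ a b, (ec * c).1 (inl a) (inl b) ↔ (topPart ec.1) a b := by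
    intro a b
    constructor
    · intro h
      have h2 := top_mul_le (ec * c).2 (c ^ (n - 1) * ec).2 h
      rwa [hmul2 _ _ _ hgu] at h2
    · intro h
      have h2 := top_mul_le ec.2 c.2 (show ec.1 (inl a) (inl b) from h)
      rwa [hmul2 _ _ _ rfl] at h2
  have hGbot : ∀ a b, (ec * c).1 (inr a) (inr b) ↔ (topPart ec.1) a b := by
    intro a b
    constructor
    · intro h
      have h2 := bot_mul_le (c ^ (n - 1) * ec).2 (ec * c).2 h
      rw [hmul2 _ _ _ hug] at h2
      exact (ec3 a b).1 h2
    · intro h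
      have h2 := bot_mul_le (ec * c).2 ec.2 ((ec3 a b).2 h)
      rwa [hmul2 _ _ _ hgec'] at h2
  have hHtop : ∀ a b, (ed * d).1 (inl a) (inl b) ↔ (topPart ed.1) a b := by
    intro a b
    constructor
    · intro h
      have h2 := top_mul_le (ed * d).2 (d ^ (nd - 1) * ed).2 h
      rwa [hmul2 _ _ _ hdu] at h2
    · intro h
      have h2 := top_mul_le ed.2 d.2 (show ed.1 (inl a) (inl b) from h)
      rwa [hmul2 _ _ _ rfl] at h2
  have hHbot : ∀ a b, (ed * d).1 (inr a) (inr b) ↔ (topPart ed.1) a b := by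
    intro a b
    constructor
    · intro h
      have h2 := bot_mul_le (d ^ (nd - 1) * ed).2 (ed * d).2 h
      rw [hmul2 _ _ _ hud] at h2
      exact (ed3 a b).1 h2
    · intro h
      have h2 := bot_mul_le (ed * d).2 ed.2 ((ed3 a b).2 h)
      rwa [hmul2 _ _ _ hhed'] at h2
  constructor
  · -- forward
    rintro ⟨x, x', hx1, hx2, hx3, hx4, hx5⟩
    have hxec : x * ec = x := by rw [← hx3, ← mul_assoc, hx1]
    have hedx : ed * x = x := by rw [← hx4, hx1]
    have hecx' : ec * x' = x' := by rw [← hx3, hx2]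
    have hx'ed : x' * ed = x' := by rw [← hx4, ← mul_assoc, hx2]
    have hBtop : ∀ a b, x.1 (inl a) (inl b) ↔ (topPart ed.1) a b := by
      intro a b
      constructor
      · intro h
        have h2 := top_mul_le x.2 x'.2 h
        rwa [hmul2 _ _ _ hx4] at h2
      · intro h
        have h2 := top_mul_le ed.2 x.2 (show ed.1 (inl a) (inl b) from h)
        rwa [hmul2 _ _ _ hedx] at h2
    have hBbot : ∀ a b, x.1 (inr a) (inr b) ↔ (topPart ec.1) a b := by
      intro a b
      constructor
      · intro h
        have h2 := bot_mul_le x'.2 x.2 h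
        rw [hmul2 _ _ _ hx3] at h2
        exact (ec3 a b).1 h2
      · intro h
        have h2 := bot_mul_le x.2 ec.2 ((ec3 a b).2 h)
        rwa [hmul2 _ _ _ hxec] at h2
    have hAtop : ∀ a b, x'.1 (inl a) (inl b) ↔ (topPart ec.1) a b := by
      intro a b
      constructor
      · intro h
        have h2 := top_mul_le x'.2 x.2 h
        rwa [hmul2 _ _ _ hx3] at h2
      · intro h
        have h2 := top_mul_le ec.2 x'.2 (show ec.1 (inl a) (inl b) from h)
        rwa [hmul2 _ _ _ hecx'] at h2
    have hAbot : ∀ a b, x'.1 (inr a) (inr b) ↔ (topPart ed.1) a b := by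
      intro a b
      constructor
      · intro h
        have h2 := bot_mul_le x.2 x'.2 h
        rw [hmul2 _ _ _ hx4] at h2
        exact (ed3 a b).1 h2
      · intro h
        have h2 := bot_mul_le x'.2 ed.2 ((ed3 a b).2 h)
        rwa [hmul2 _ _ _ hx'ed] at h2
    have hcompAB : ∀ m m', x'.1 (inr m) (inr m') ↔ x.1 (inl m) (inl m') :=
      fun m m' => (hAbot m m').trans (hBtop m m').symm
    have hcompBG : ∀ m m', x.1 (inr m) (inr m') ↔ (ec * c).1 (inl m) (inl m') :=
      fun m m' => (hBbot m m').trans (hGtop m m').symm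
    have hBGu : IsUniform k (ubpMul x.1 (ec * c).1) := by
      rw [← hmul]; exact (x * (ec * c)).2
    have hcompBGA : ∀ m m', (ubpMul x.1 (ec * c).1) (inr m) (inr m') ↔
        x'.1 (inl m) (inl m') := fun m m' =>
      (mul_inr_inr_compat hcompBG x.2 (ec * c).2 m m').trans
        ((hGbot m m').trans (hAtop m m').symm)
    have hH1 : (ed * d).1 = ubpMul (ubpMul x.1 (ec * c).1) x'.1 := by
      rw [← hx5, hmul, hmul]
    have hblockH : ∀ S, blockMap (ed * d).1 S =
        blockMap x'.1 (blockMap (ec * c).1 (blockMap x.1 S)) := by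
      intro S
      rw [hH1, blockMap_mul hcompBGA hBGu x'.2, blockMap_mul hcompBG x.2 (ec * c).2]
    have hABid : ∀ {C : Set (Fin k)}, C ∈ (topPart ec.1).classes →
        blockMap x.1 (blockMap x'.1 C) = C := by
      intro C hC
      rw [← blockMap_mul hcompAB x'.2 x.2, hmul2 _ _ _ hx3]
      exact blockMap_idem ec2 hC
    have hcompBA : ∀ m m', x.1 (inr m) (inr m') ↔ x'.1 (inl m) (inl m') :=
      fun m m' => (hBbot m m').trans (hAtop m m').symm
    have hBAid : ∀ {D : Set (Fin k)}, D ∈ (topPart ed.1).classes →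
        blockMap x'.1 (blockMap x.1 D) = D := by
      intro D hD
      rw [← blockMap_mul hcompBA x.2 x'.2, hmul2 _ _ _ hx4]
      exact blockMap_idem ed2 hD
    refine ⟨⟨fun C => ⟨blockMap x'.1 C, (blockMap_class_spec x'.2 hAtop hAbot C.2).1⟩,
      fun D => ⟨blockMap x.1 D, (blockMap_class_spec x.2 hBtop hBbot D.2).1⟩,
      fun C => Subtype.ext (hABid C.2), fun D => Subtype.ext (hBAid D.2)⟩, ?_, ?_⟩
    · intro C
      exact (blockMap_class_spec x'.2 hAtop hAbot C.2).2
    · intro C D hCD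
      show blockMap (ed * d).1 (blockMap x'.1 C) = blockMap x'.1 D
      calc blockMap (ed * d).1 (blockMap x'.1 C)
          = blockMap x'.1 (blockMap (ec * c).1 (blockMap x.1 (blockMap x'.1 C))) :=
            hblockH _
        _ = blockMap x'.1 (blockMap (ec * c).1 C) := by rw [hABid C.2]
        _ = blockMap x'.1 D := by rw [hCD]
  · -- backward
    rintro ⟨Φ, hsize, hint⟩
    have hsz2 : ∀ D : ↥(topPart ed.1).classes,
        (D : Set (Fin k)).ncard = ((Φ.symm D : Set (Fin k))).ncard := by
      intro D
      rw [hsize (Φ.symm D), Equiv.apply_symm_apply]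
    have h3 : (show UBPel k from ⟨mkSetoid (topPart ec.1) (topPart ed.1) Φ, mkSetoid_uniform Φ hsize⟩) *
        (show UBPel k from ⟨mkSetoid (topPart ed.1) (topPart ec.1) Φ.symm, mkSetoid_uniform Φ.symm hsz2⟩) = ec := by
      refine Subtype.ext ?_
      rw [hmul]
      exact mk_mul_symm Φ hsize hsz2 ec1 ec2 ec3
    have h4 : (show UBPel k from ⟨mkSetoid (topPart ed.1) (topPart ec.1) Φ.symm, mkSetoid_uniform Φ.symm hsz2⟩) *
        (show UBPel k from ⟨mkSetoid (topPart ec.1) (topPart ed.1) Φ, mkSetoid_uniform Φ hsize⟩) = ed := by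
      refine Subtype.ext ?_
      rw [hmul]
      have hsz3 : ∀ C : ↥(topPart ec.1).classes,
          (C : Set (Fin k)).ncard = ((Φ.symm.symm C : Set (Fin k))).ncard := by
        intro C
        rw [Equiv.symm_symm]
        exact hsize C
      have h := mk_mul_symm Φ.symm hsz2 hsz3 ed1 ed2 ed3
      rwa [Equiv.symm_symm] at h
    refine ⟨⟨mkSetoid (topPart ed.1) (topPart ec.1) Φ.symm, mkSetoid_uniform Φ.symm hsz2⟩,
      ⟨mkSetoid (topPart ec.1) (topPart ed.1) Φ, mkSetoid_uniform Φ hsize⟩, ?_, ?_, h3, h4, ?_⟩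
    · rw [h4]
      refine Subtype.ext ?_
      refine (hmul _ _).trans ?_
      exact e_mul_mk Φ.symm hsz2 ed1 ed2 ed3
    · rw [h3]
      refine Subtype.ext ?_
      refine (hmul _ _).trans ?_
      exact e_mul_mk Φ hsize ec1 ec2 ec3
    · -- the conjugation equation
      refine Subtype.ext ?_
      refine ((hmul _ _).trans (congrArg (fun t => ubpMul t _) (hmul _ _))).trans ?_
      have compat1 : ∀ m m', (mkSetoid (topPart ed.1) (topPart ec.1) Φ.symm) (inr m) (inr m') ↔
          (ec * c).1 (inl m) (inl m') := fun m m' => (hGtop m m').symm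
      have hBGu : IsUniform k (ubpMul (mkSetoid (topPart ed.1) (topPart ec.1) Φ.symm) (ec * c).1) :=
        (hmul (show UBPel k from ⟨mkSetoid (topPart ed.1) (topPart ec.1) Φ.symm, mkSetoid_uniform Φ.symm hsz2⟩)
            (ec * c)) ▸
          ((show UBPel k from ⟨mkSetoid (topPart ed.1) (topPart ec.1) Φ.symm, mkSetoid_uniform Φ.symm hsz2⟩) *
            (ec * c)).2
      have compat2 : ∀ m m',
          (ubpMul (mkSetoid (topPart ed.1) (topPart ec.1) Φ.symm) (ec * c).1) (inr m) (inr m') ↔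
          (mkSetoid (topPart ec.1) (topPart ed.1) Φ) (inl m) (inl m') := fun m m' =>
        (mul_inr_inr_compat compat1 (mkSetoid_uniform Φ.symm hsz2) (ec * c).2 m m').trans
          (hGbot m m')
      refine setoid_ext3 ?_ ?_ ?_
      · intro i i'
        exact ((mul_inl_inl_compat compat2 hBGu (mkSetoid_uniform Φ hsize) i i').trans
          (mul_inl_inl_compat compat1 (mkSetoid_uniform Φ.symm hsz2) (ec * c).2 i i')).trans
          (hHtop i i').symm
      · intro i j
        rw [mul_inl_inr_compat compat2 hBGu (mkSetoid_uniform Φ hsize) i j]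
        have hD2mem := (blockMap_class_spec (ec * c).2 hGtop hGbot
          (Φ.symm (clsOf (topPart ed.1) i)).2).1
        have hintCD := hint (Φ.symm (clsOf (topPart ed.1) i))
          ⟨blockMap (ec * c).1 ((Φ.symm (clsOf (topPart ed.1) i) : Set (Fin k))), hD2mem⟩ rfl
        rw [Equiv.apply_symm_apply] at hintCD
        constructor
        · rintro ⟨m', hbg, hA⟩
          obtain ⟨m, hBim, hGmm'⟩ :=
            (mul_inl_inr_compat compat1 (mkSetoid_uniform Φ.symm hsz2) (ec * c).2 i m').1 hbg
          have hm'D₂ : m' ∈ ((⟨blockMap (ec * c).1 ((Φ.symm (clsOf (topPart ed.1) i) : Set (Fin k))),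
              hD2mem⟩ : ↥(topPart ec.1).classes) : Set (Fin k)) := ⟨m, hBim, hGmm'⟩
          have hAj : j ∈ (Φ (clsOf (topPart ec.1) m') : Set (Fin k)) := hA
          rw [← class_eq_clsOf hm'D₂] at hAj
          rw [← hintCD] at hAj
          obtain ⟨a, ha, haj⟩ := hAj
          exact (ed * d).1.trans ((hHtop i a).2 ((topPart ed.1).symm ha)) haj
        · intro hH
          have hj : j ∈ blockMap (ed * d).1 ((clsOf (topPart ed.1) i : Set (Fin k))) :=
            ⟨i, mem_clsOf_self i, hH⟩
          rw [hintCD] at hj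
          obtain ⟨m, hm⟩ := class_nonempty (Φ.symm (clsOf (topPart ed.1) i)).2
          obtain ⟨m', hGmm'⟩ := exists_bot (ec * c).2 m
          have hm'D₂ : m' ∈ ((⟨blockMap (ec * c).1 ((Φ.symm (clsOf (topPart ed.1) i) : Set (Fin k))),
              hD2mem⟩ : ↥(topPart ec.1).classes) : Set (Fin k)) := ⟨m, hm, hGmm'⟩
          refine ⟨m', (mul_inl_inr_compat compat1 (mkSetoid_uniform Φ.symm hsz2) (ec * c).2 i m').2
            ⟨m, hm, hGmm'⟩, ?_⟩
          show j ∈ (Φ (clsOf (topPart ec.1) m') : Set (Fin k))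
          rw [← class_eq_clsOf hm'D₂]
          exact hj
      · intro j j'
        exact (mul_inr_inr_compat compat2 hBGu (mkSetoid_uniform Φ hsize) j j').trans
          (hHbot j j').symm
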